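/- Let a_1 ≥ a_2 ≥ a_3 ≥ 0 be real numbers and let f : ℝ → ℝ be convex on [0, a_1]. Then f(a_1 - a_2 + a_3) ≤ f(a_1) - f(a_2) + f(a_3). -/

import Mathlib

/-- Let `a₁ ≥ a₂ ≥ a₃ ≥ 0` and let `f : ℝ → ℝ` be convex on `[0, a₁]`.
Then `f (a₁ - a₂ + a₃) ≤ f a₁ - f a₂ + f a₃`. -/
theorem stmt_14 (a₁ a₂ a₃ : ℝ) (h₁₂ : a₂ ≤ a₁) (h₂₃ : a₃ ≤ a₂) (h₃ : 0 ≤ a₃)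
    (f : ℝ → ℝ) (hf : ConvexOn ℝ (Set.Icc 0 a₁) f) :
    f (a₁ - a₂ + a₃) ≤ f a₁ - f a₂ + f a₃ := by
  rcases eq_or_lt_of_le (h₂₃.trans h₁₂) with h | h
  · have h2 : a₂ = a₁ := le_antisymm h₁₂ (h ▸ h₂₃)
    have h3 : a₃ = a₁ := h
    rw [h2, h3]; simp
  · set t : ℝ := (a₂ - a₃) / (a₁ - a₃) with ht
    have hd : 0 < a₁ - a₃ := by linarith
    have ht0 : 0 ≤ t := div_nonneg (by linarith) hd.le
    have ht1 : t ≤ 1 := (div_le_one hd).2 (by linarith)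
    have h3mem : a₃ ∈ Set.Icc 0 a₁ := ⟨h₃, h₂₃.trans h₁₂⟩
    have h1mem : a₁ ∈ Set.Icc 0 a₁ := ⟨h₃.trans (h₂₃.trans h₁₂), le_refl _⟩
    have e1 : (1 - t) * a₃ + t * a₁ = a₂ := by
      rw [ht]; field_simp [hd.ne']; ring
    have e2 : t * a₃ + (1 - t) * a₁ = a₁ - a₂ + a₃ := by
      rw [ht]; field_simp [hd.ne']; ring
    have c1 := hf.2 h3mem h1mem (by linarith : (0:ℝ) ≤ 1 - t) ht0 (by ring)
    have c2 := hf.2 h3mem h1mem ht0 (by linarith : (0:ℝ) ≤ 1 - t) (by ring)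
    simp only [smul_eq_mul] at c1 c2
    rw [e1] at c1
    rw [e2] at c2
    linarith
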